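/- Let R₂ be as defined. For every position (x,y) with y > 2x+1, there are exactly two z with 0 ≤ z < y such that (x,z) ∈ R₂, and no horizontal or diagonal option of (x,y) lies in R₂. -/

import Mathlib

noncomputable def goldenPhi : ℝ := (1 + Real.sqrt 5) / 2

/-- The candidate set of P-positions of Blocking-2 Wythoff Nim. -/
def R2 : Set (ℕ × ℕ) :=
  {(0, 0)} ∪
  {p | ∃ n : ℕ, p = (n, 2 * n + 1) ∨ p = (2 * n + 1, n)} ∪
  {p | ∃ n : ℕ, p = (2 * ⌊goldenPhi * n⌋₊ + 2, 2 * ⌊goldenPhi ^ 2 * n⌋₊ + 2) ∨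
                p = (2 * ⌊goldenPhi ^ 2 * n⌋₊ + 2, 2 * ⌊goldenPhi * n⌋₊ + 2)}

lemma gp_eq : goldenPhi = Real.goldenRatio := rfl

lemma gp_one_lt : 1 < goldenPhi := gp_eq ▸ Real.one_lt_goldenRatio

lemma gp_pos : 0 < goldenPhi := lt_trans one_pos gp_one_lt

lemma gp_sq : goldenPhi ^ 2 = goldenPhi + 1 := gp_eq ▸ Real.goldenRatio_sq

lemma gp_irr : Irrational goldenPhi := gp_eq ▸ Real.goldenRatio_irrational

lemma gp_lt_two : goldenPhi < 2 := by
  have h5 : Real.sqrt 5 ^ 2 = 5 := Real.sq_sqrt (by norm_num)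
  have h5n := Real.sqrt_nonneg 5
  rw [goldenPhi]; nlinarith

lemma gp_conj : Real.HolderConjugate goldenPhi (goldenPhi ^ 2) := by
  refine Real.holderConjugate_iff.mpr ⟨gp_one_lt, ?_⟩
  have h := gp_sq
  have h0 : goldenPhi ≠ 0 := ne_of_gt gp_pos
  field_simp
  nlinarith [gp_pos]

lemma le_nfloor_phi (n : ℕ) : n ≤ ⌊goldenPhi * (n : ℝ)⌋₊ :=
  Nat.le_floor (by nlinarith [gp_one_lt, Nat.cast_nonneg (α := ℝ) n])

lemma nfloor_phi_le (n : ℕ) : ⌊goldenPhi * (n : ℝ)⌋₊ ≤ 2 * n := by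
  have : goldenPhi * (n : ℝ) ≤ ((2 * n : ℕ) : ℝ) := by
    push_cast; nlinarith [gp_lt_two, Nat.cast_nonneg (α := ℝ) n]
  calc ⌊goldenPhi * (n : ℝ)⌋₊ ≤ ⌊((2 * n : ℕ) : ℝ)⌋₊ := Nat.floor_mono this
    _ = 2 * n := Nat.floor_natCast _

lemma nfloor_phi_sq (n : ℕ) : ⌊goldenPhi ^ 2 * (n : ℝ)⌋₊ = ⌊goldenPhi * (n : ℝ)⌋₊ + n := by
  have h : goldenPhi ^ 2 * (n : ℝ) = goldenPhi * (n : ℝ) + n := by rw [gp_sq]; ring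
  rw [h, Nat.floor_add_natCast (mul_nonneg gp_pos.le (Nat.cast_nonneg n))]

lemma nfloor_phi_lt {n m : ℕ} (h : n < m) :
    ⌊goldenPhi * (n : ℝ)⌋₊ < ⌊goldenPhi * (m : ℝ)⌋₊ := by
  have h1 : (⌊goldenPhi * (n : ℝ)⌋₊ : ℝ) ≤ goldenPhi * n :=
    Nat.floor_le (mul_nonneg gp_pos.le (Nat.cast_nonneg n))
  have h2 : (n : ℝ) + 1 ≤ m := by exact_mod_cast h
  have h3 : (⌊goldenPhi * (n : ℝ)⌋₊ + 1 : ℕ) ≤ ⌊goldenPhi * (m : ℝ)⌋₊ := by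
    apply Nat.le_floor
    push_cast
    nlinarith [gp_one_lt]
  omega

lemma nfloor_phi_inj {n m : ℕ} (h : ⌊goldenPhi * (n : ℝ)⌋₊ = ⌊goldenPhi * (m : ℝ)⌋₊) :
    n = m := by
  rcases lt_trichotomy n m with h' | h' | h'
  · exact absurd h (nfloor_phi_lt h').ne
  · exact h'
  · exact absurd h.symm (nfloor_phi_lt h').ne

lemma nfloor_phisq_inj {n m : ℕ}
    (h : ⌊goldenPhi ^ 2 * (n : ℝ)⌋₊ = ⌊goldenPhi ^ 2 * (m : ℝ)⌋₊) : n = m := by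
  rw [nfloor_phi_sq, nfloor_phi_sq] at h
  rcases lt_trichotomy n m with h' | h' | h'
  · have := nfloor_phi_lt h'; omega
  · exact h'
  · have := nfloor_phi_lt h'; omega

lemma cast_beatty {r : ℝ} (hr : 0 ≤ r) (n : ℕ) :
    beattySeq r (n : ℤ) = (⌊r * (n : ℝ)⌋₊ : ℤ) := by
  rw [beattySeq, Int.natCast_floor_eq_floor (mul_nonneg hr (Nat.cast_nonneg n))]
  congr 1
  push_cast
  ring

lemma beatty_cover {j : ℕ} (hj : 1 ≤ j) :
    (∃ n : ℕ, j = ⌊goldenPhi * (n : ℝ)⌋₊) ∨ (∃ n : ℕ, j = ⌊goldenPhi ^ 2 * (n : ℝ)⌋₊) := by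
  have hsym := gp_irr.beattySeq_symmDiff_beattySeq_pos gp_conj
  have hjmem : (j : ℤ) ∈ ({n : ℤ | 0 < n} : Set ℤ) := by
    simp only [Set.mem_setOf_eq]; exact_mod_cast hj
  rw [← hsym, Set.mem_symmDiff] at hjmem
  rcases hjmem with ⟨⟨k, hk, hkj⟩, -⟩ | ⟨⟨k, hk, hkj⟩, -⟩
  · left
    refine ⟨k.toNat, ?_⟩
    have hk' : ((k.toNat : ℕ) : ℤ) = k := Int.toNat_of_nonneg hk.le
    have := cast_beatty gp_pos.le k.toNat
    rw [hk', hkj] at this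
    exact_mod_cast this
  · right
    refine ⟨k.toNat, ?_⟩
    have hk' : ((k.toNat : ℕ) : ℤ) = k := Int.toNat_of_nonneg hk.le
    have := cast_beatty (by positivity : (0:ℝ) ≤ goldenPhi ^ 2) k.toNat
    rw [hk', hkj] at this
    exact_mod_cast this

lemma beatty_disj {n m : ℕ} (hn : 1 ≤ n) (hm : 1 ≤ m) :
    ⌊goldenPhi * (n : ℝ)⌋₊ ≠ ⌊goldenPhi ^ 2 * (m : ℝ)⌋₊ := by
  intro h
  have hsym := gp_irr.beattySeq_symmDiff_beattySeq_pos gp_conj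
  set j := ⌊goldenPhi * (n : ℝ)⌋₊ with hj
  have hjpos : 0 < j := lt_of_lt_of_le hn (le_nfloor_phi n)
  have hA : (j : ℤ) ∈ {x : ℤ | ∃ k > 0, beattySeq goldenPhi k = x} := by
    refine ⟨(n : ℤ), by exact_mod_cast hn, ?_⟩
    rw [cast_beatty gp_pos.le n]
  have hB : (j : ℤ) ∈ {x : ℤ | ∃ k > 0, beattySeq (goldenPhi ^ 2) k = x} := by
    refine ⟨(m : ℤ), by exact_mod_cast hm, ?_⟩
    rw [cast_beatty (by positivity : (0:ℝ) ≤ goldenPhi ^ 2) m, h]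
  have hmem : (j : ℤ) ∈ ({x : ℤ | 0 < x} : Set ℤ) := by
    simp only [Set.mem_setOf_eq]; exact_mod_cast hjpos
  rw [← hsym, Set.mem_symmDiff] at hmem
  tauto

lemma mem_R2_iff {a b : ℕ} : (a, b) ∈ R2 ↔
    (a = 0 ∧ b = 0) ∨
    (∃ n : ℕ, (a = n ∧ b = 2 * n + 1) ∨ (a = 2 * n + 1 ∧ b = n)) ∨
    (∃ n : ℕ, (a = 2 * ⌊goldenPhi * (n : ℝ)⌋₊ + 2 ∧ b = 2 * ⌊goldenPhi ^ 2 * (n : ℝ)⌋₊ + 2) ∨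
              (a = 2 * ⌊goldenPhi ^ 2 * (n : ℝ)⌋₊ + 2 ∧ b = 2 * ⌊goldenPhi * (n : ℝ)⌋₊ + 2)) := by
  simp only [R2, Set.mem_union, Set.mem_setOf_eq, Set.mem_singleton_iff, Prod.ext_iff]
  exact or_assoc

lemma R2_snd_le {a b : ℕ} (h : (a, b) ∈ R2) : b ≤ 2 * a + 1 := by
  rw [mem_R2_iff] at h
  rcases h with ⟨h1, h2⟩ | ⟨n, ⟨h1, h2⟩ | ⟨h1, h2⟩⟩ | ⟨n, ⟨h1, h2⟩ | ⟨h1, h2⟩⟩ <;>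
    first
    | omega
    | (have hs := nfloor_phi_sq n
       have hl := le_nfloor_phi n
       omega)

lemma mem2a (n : ℕ) : (n, 2 * n + 1) ∈ R2 := by
  rw [mem_R2_iff]; exact Or.inr (Or.inl ⟨n, Or.inl ⟨rfl, rfl⟩⟩)

lemma mem2b (n : ℕ) : (2 * n + 1, n) ∈ R2 := by
  rw [mem_R2_iff]; exact Or.inr (Or.inl ⟨n, Or.inr ⟨rfl, rfl⟩⟩)

lemma mem3a (n : ℕ) :
    (2 * ⌊goldenPhi * (n : ℝ)⌋₊ + 2, 2 * ⌊goldenPhi ^ 2 * (n : ℝ)⌋₊ + 2) ∈ R2 := by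
  rw [mem_R2_iff]; exact Or.inr (Or.inr ⟨n, Or.inl ⟨rfl, rfl⟩⟩)

lemma mem3b (n : ℕ) :
    (2 * ⌊goldenPhi ^ 2 * (n : ℝ)⌋₊ + 2, 2 * ⌊goldenPhi * (n : ℝ)⌋₊ + 2) ∈ R2 := by
  rw [mem_R2_iff]; exact Or.inr (Or.inr ⟨n, Or.inr ⟨rfl, rfl⟩⟩)

lemma column (x : ℕ) : ∃ a b : ℕ, a ≠ b ∧ a ≤ 2 * x + 1 ∧ b ≤ 2 * x + 1 ∧
    ∀ z : ℕ, (x, z) ∈ R2 ↔ z = a ∨ z = b := by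
  rcases Nat.eq_zero_or_pos x with rfl | hx
  · refine ⟨0, 1, by omega, by omega, by omega, fun z => ?_⟩
    constructor
    · intro h
      rw [mem_R2_iff] at h
      rcases h with ⟨h1, h2⟩ | ⟨n, ⟨h1, h2⟩ | ⟨h1, h2⟩⟩ | ⟨n, ⟨h1, h2⟩ | ⟨h1, h2⟩⟩ <;> omega
    · rintro (rfl | rfl)
      · rw [mem_R2_iff]; exact Or.inl ⟨rfl, rfl⟩
      · simpa using mem2a 0
  rcases Nat.even_or_odd x with ⟨m, hm⟩ | ⟨m, hm⟩
  · -- x even, x = m + m with m ≥ 1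
    have hm1 : 1 ≤ m := by omega
    rcases Nat.eq_or_lt_of_le hm1 with h1 | h2
    · -- x = 2
      refine ⟨2 * x + 1, 2, by omega, by omega, by omega, fun z => ?_⟩
      constructor
      · intro h
        rw [mem_R2_iff] at h
        rcases h with ⟨ha, hb⟩ | ⟨n, ⟨ha, hb⟩ | ⟨ha, hb⟩⟩ | ⟨n, ⟨ha, hb⟩ | ⟨ha, hb⟩⟩ <;>
          first
          | omega
          | (have hs := nfloor_phi_sq n
             have hl := le_nfloor_phi n
             have hu := nfloor_phi_le n
             omega)
      · rintro (rfl | rfl)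
        · exact mem2a x
        · have hx2 : x = 2 := by omega
          subst hx2
          simpa using mem3a 0
    · -- x = 2 * (m - 1) + 2 with m - 1 ≥ 1
      rcases beatty_cover (j := m - 1) (by omega) with ⟨n, hn⟩ | ⟨n, hn⟩
      · -- m - 1 = ⌊φ n⌋
        have hu := nfloor_phi_le n
        have hl := le_nfloor_phi n
        have hs := nfloor_phi_sq n
        have hn1 : 1 ≤ n := by omega
        refine ⟨2 * x + 1, 2 * ⌊goldenPhi ^ 2 * (n : ℝ)⌋₊ + 2, by omega, by omega, by omega,
          fun z => ?_⟩
        constructor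
        · intro h
          rw [mem_R2_iff] at h
          rcases h with ⟨ha, hb⟩ | ⟨n', ⟨ha, hb⟩ | ⟨ha, hb⟩⟩ | ⟨n', ⟨ha, hb⟩ | ⟨ha, hb⟩⟩
          · omega
          · omega
          · omega
          · have he : ⌊goldenPhi * (n' : ℝ)⌋₊ = ⌊goldenPhi * (n : ℝ)⌋₊ := by omega
            obtain rfl := nfloor_phi_inj he
            omega
          · have hs' := nfloor_phi_sq n'
            have hu' := nfloor_phi_le n'
            have hn1' : 1 ≤ n' := by omega
            have hd := beatty_disj hn1 hn1'
            omega
        · rintro (rfl | rfl)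
          · exact mem2a x
          · have hxe : x = 2 * ⌊goldenPhi * (n : ℝ)⌋₊ + 2 := by omega
            rw [hxe]; exact mem3a n
      · -- m - 1 = ⌊φ² n⌋
        have hu := nfloor_phi_le n
        have hl := le_nfloor_phi n
        have hs := nfloor_phi_sq n
        have hn1 : 1 ≤ n := by omega
        refine ⟨2 * x + 1, 2 * ⌊goldenPhi * (n : ℝ)⌋₊ + 2, by omega, by omega, by omega,
          fun z => ?_⟩
        constructor
        · intro h
          rw [mem_R2_iff] at h
          rcases h with ⟨ha, hb⟩ | ⟨n', ⟨ha, hb⟩ | ⟨ha, hb⟩⟩ | ⟨n', ⟨ha, hb⟩ | ⟨ha, hb⟩⟩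
          · omega
          · omega
          · omega
          · have hu' := nfloor_phi_le n'
            have hl' := le_nfloor_phi n'
            have hn1' : 1 ≤ n' := by omega
            have hd := beatty_disj hn1' hn1
            omega
          · have hs' := nfloor_phi_sq n'
            have he : ⌊goldenPhi ^ 2 * (n' : ℝ)⌋₊ = ⌊goldenPhi ^ 2 * (n : ℝ)⌋₊ := by omega
            obtain rfl := nfloor_phisq_inj he
            omega
        · rintro (rfl | rfl)
          · exact mem2a x
          · have hxe : x = 2 * ⌊goldenPhi ^ 2 * (n : ℝ)⌋₊ + 2 := by omega
            rw [hxe]; exact mem3b n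
  · -- x odd, x = 2 * m + 1
    refine ⟨2 * x + 1, m, by omega, by omega, by omega, fun z => ?_⟩
    constructor
    · intro h
      rw [mem_R2_iff] at h
      rcases h with ⟨ha, hb⟩ | ⟨n, ⟨ha, hb⟩ | ⟨ha, hb⟩⟩ | ⟨n, ⟨ha, hb⟩ | ⟨ha, hb⟩⟩ <;> omega
    · rintro (rfl | hz)
      · exact mem2a x
      · have h2 := mem2b m
        rw [← hm] at h2
        rwa [hz]

/-- For every (x,y) with y > 2x+1: exactly two vertical options of (x,y) lie in R₂,
and no horizontal or diagonal option of (x,y) lies in R₂. -/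
theorem R2_above_line :
    ∀ x y : ℕ, 2 * x + 1 < y →
      ({z : ℕ | z < y ∧ (x, z) ∈ R2}.ncard = 2) ∧
      (∀ i : ℕ, 0 < i → i ≤ x → (x - i, y) ∉ R2) ∧
      (∀ i : ℕ, 0 < i → i ≤ min x y → (x - i, y - i) ∉ R2) := by
  intro x y hy
  refine ⟨?_, ?_, ?_⟩
  · obtain ⟨a, b, hab, ha, hb, hcol⟩ := column x
    have hset : {z : ℕ | z < y ∧ (x, z) ∈ R2} = {a, b} := by
      ext z
      simp only [Set.mem_setOf_eq, Set.mem_insert_iff, Set.mem_singleton_iff, hcol]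
      constructor
      · rintro ⟨-, h⟩; exact h
      · rintro (rfl | rfl)
        · exact ⟨by omega, Or.inl rfl⟩
        · exact ⟨by omega, Or.inr rfl⟩
    rw [hset, Set.ncard_pair hab]
  · intro i hi hix h
    have := R2_snd_le h
    omega
  · intro i hi hix h
    have := R2_snd_le h
    have h1 : i ≤ x := le_trans hix (min_le_left _ _)
    have h2 : i ≤ y := le_trans hix (min_le_right _ _)
    omega
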